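/- arXiv:2407.01443 — 4 statements merged into one kernel-verified Lean document; each statement's English description precedes it below -/
import Mathlib

section
/- The boundary stencil of the fourth-order mimetic gradient is fourth-order accurate: for f ∈ C⁵, (1/Δx)[ −(352/105) f(0) + (35/8) f(Δx/2) − (35/24) f(3Δx/2) + (21/40) f(5Δx/2) − (5/56) f(7Δx/2) ] = f′(0) + O(Δx⁴). -/
/-- The boundary stencil of the fourth-order mimetic gradient is
fourth-order accurate at the boundary `x = 0`. -/
theorem stmt_7 (f : ℝ → ℝ) (hf : ContDiff ℝ 5 f) :
    ∃ C > (0:ℝ), ∃ δ > (0:ℝ), ∀ Δx : ℝ, 0 < Δx → Δx < δ →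
      |(1/Δx) * (-(352/105) * f 0 + (35/8) * f (Δx/2) - (35/24) * f (3*Δx/2)
          + (21/40) * f (5*Δx/2) - (5/56) * f (7*Δx/2))
        - deriv f 0| ≤ C * Δx^4 := by
  set s : Set ℝ := Set.Icc (0:ℝ) (7/2) with hs
  have husd : UniqueDiffOn ℝ s := uniqueDiffOn_Icc (by norm_num)
  have hf5 : ContDiffOn ℝ ((4:ℕ)+1) f s := by
    exact_mod_cast hf.contDiffOn
  obtain ⟨C0, hC0⟩ := exists_taylor_mean_remainder_bound (by norm_num : (0:ℝ) ≤ 7/2) hf5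
  set C0' : ℝ := max C0 1 with hC0'
  have hC0'pos : 0 < C0' := lt_of_lt_of_le one_pos (le_max_right _ _)
  have hC0le : C0 ≤ C0' := le_max_left _ _
  set T : ℝ → ℝ := fun y => taylorWithinEval f 4 s 0 y with hTdef
  -- Taylor polynomial expansion
  have hT : ∀ y : ℝ, T y = iteratedDerivWithin 0 f s 0 + y * iteratedDerivWithin 1 f s 0
      + y^2/2 * iteratedDerivWithin 2 f s 0 + y^3/6 * iteratedDerivWithin 3 f s 0
      + y^4/24 * iteratedDerivWithin 4 f s 0 := by
    intro y
    rw [hTdef]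
    simp only [taylor_within_apply, Finset.sum_range_succ, Finset.sum_range_zero]
    norm_num [Nat.factorial]
    ring
  have hd1 : iteratedDerivWithin 1 f s 0 = deriv f 0 := by
    have hu : UniqueDiffWithinAt ℝ s 0 := husd 0 ⟨le_refl 0, by norm_num⟩
    rw [iteratedDerivWithin_one]
    exact ((hf.differentiable (by norm_num)).differentiableAt).derivWithin hu
  refine ⟨875/8 * C0', by positivity, 1, one_pos, fun Δx hΔ hΔ1 => ?_⟩
  have hΔne : Δx ≠ 0 := ne_of_gt hΔ
  -- remainders
  set r0 : ℝ := f 0 - T 0 with hr0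
  set r1 : ℝ := f (Δx/2) - T (Δx/2) with hr1
  set r2 : ℝ := f (3*Δx/2) - T (3*Δx/2) with hr2
  set r3 : ℝ := f (5*Δx/2) - T (5*Δx/2) with hr3
  set r4 : ℝ := f (7*Δx/2) - T (7*Δx/2) with hr4
  have hb : ∀ x : ℝ, x ∈ s → |f x - T x| ≤ C0' * x^5 := fun x hx => by
    have := hC0 x hx
    simp only [Real.norm_eq_abs, sub_zero] at this
    calc |f x - T x| ≤ C0 * x^(4+1) := this
      _ ≤ C0' * x^5 := by
          have hx0 : 0 ≤ x := hx.1
          have h5 : (0:ℝ) ≤ x^5 := by positivity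
          have : x^(4+1) = x^5 := by norm_num
          rw [this]
          exact mul_le_mul_of_nonneg_right hC0le h5
  have hm1 : (Δx/2 : ℝ) ∈ s := ⟨by linarith, by linarith⟩
  have hm2 : (3*Δx/2 : ℝ) ∈ s := ⟨by linarith, by linarith⟩
  have hm3 : (5*Δx/2 : ℝ) ∈ s := ⟨by linarith, by linarith⟩
  have hm4 : (7*Δx/2 : ℝ) ∈ s := ⟨by linarith, by linarith⟩
  have hb0 : |r0| ≤ C0' * 0 := by
    have := hb 0 ⟨le_refl 0, by norm_num⟩; simpa using this
  have hb1 : |r1| ≤ C0' * (Δx/2)^5 := hb _ hm1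
  have hb2 : |r2| ≤ C0' * (3*Δx/2)^5 := hb _ hm2
  have hb3 : |r3| ≤ C0' * (5*Δx/2)^5 := hb _ hm3
  have hb4 : |r4| ≤ C0' * (7*Δx/2)^5 := hb _ hm4
  -- stencil applied to the Taylor polynomial is exact
  have hTsum : -(352/105) * T 0 + (35/8) * T (Δx/2) - (35/24) * T (3*Δx/2)
      + (21/40) * T (5*Δx/2) - (5/56) * T (7*Δx/2) = Δx * deriv f 0 := by
    rw [hT 0, hT (Δx/2), hT (3*Δx/2), hT (5*Δx/2), hT (7*Δx/2), ← hd1]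
    ring
  have key : (1/Δx) * (-(352/105) * f 0 + (35/8) * f (Δx/2) - (35/24) * f (3*Δx/2)
      + (21/40) * f (5*Δx/2) - (5/56) * f (7*Δx/2)) - deriv f 0
      = (1/Δx) * (-(352/105) * r0 + (35/8) * r1 - (35/24) * r2 + (21/40) * r3 - (5/56) * r4) := by
    rw [hr0, hr1, hr2, hr3, hr4]
    have : deriv f 0 = (1/Δx) * (Δx * deriv f 0) := by field_simp
    rw [this, ← hTsum]
    ring
  rw [key, abs_mul, abs_of_pos (by positivity : (0:ℝ) < 1/Δx)]
  rw [show ((Δx:ℝ)/2)^5 = (1/32)*Δx^5 by ring] at hb1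
  rw [show ((3*Δx:ℝ)/2)^5 = (243/32)*Δx^5 by ring] at hb2
  rw [show ((5*Δx:ℝ)/2)^5 = (3125/32)*Δx^5 by ring] at hb3
  rw [show ((7*Δx:ℝ)/2)^5 = (16807/32)*Δx^5 by ring] at hb4
  have habs : |(-(352/105) * r0 + (35/8) * r1 - (35/24) * r2 + (21/40) * r3 - (5/56) * r4)|
      ≤ C0' * (875/8) * Δx^5 := by
    have h0 := abs_le.mp hb0
    have h1 := abs_le.mp hb1
    have h2 := abs_le.mp hb2
    have h3 := abs_le.mp hb3
    have h4 := abs_le.mp hb4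
    rw [abs_le]
    constructor <;> linarith [h0.1, h0.2, h1.1, h1.2, h2.1, h2.2, h3.1, h3.2, h4.1, h4.2]
  calc (1/Δx) * |(-(352/105) * r0 + (35/8) * r1 - (35/24) * r2 + (21/40) * r3 - (5/56) * r4)|
      ≤ (1/Δx) * (C0' * (875/8) * Δx^5) := by
        apply mul_le_mul_of_nonneg_left habs (by positivity)
    _ = 875/8 * C0' * Δx^4 := by field_simp
end

section
/- Semi-discrete energy conservation: let D̃, G̃ be linear operators on finite-dimensional spaces and J > 0 a positive diagonal matrix, and suppose the curvilinear discrete product rule D̃(p ⊙ V) = p ⊙ D̃ V + ⟨G̃ p, V⟩ holds pointwise. If p(t), V(t) solve ṗ = −(1/(2J)) D̃ V and V̇ = −(1/J) G̃ p, then pointwise d/dt [ p_i² + (1/2)⟨V_i, V_i⟩ ] = −(1/J_i) (D̃(p V))_i. -/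
/-- Dot product on ℝ². -/
def dot2 (a b : ℝ × ℝ) : ℝ := a.1 * b.1 + a.2 * b.2

/-- Semi-discrete pointwise energy identity for the curvilinear acoustic
system. -/
theorem stmt_9 (N : ℕ)
    (Dt : ((Fin N → ℝ × ℝ)) →ₗ[ℝ] (Fin N → ℝ))      -- curvilinear divergence D̃
    (Gt : ((Fin N → ℝ)) →ₗ[ℝ] (Fin N → ℝ × ℝ))      -- curvilinear gradient G̃
    (J : Fin N → ℝ) (hJ : ∀ i, 0 < J i)
    (hprod : ∀ (f : Fin N → ℝ) (w : Fin N → ℝ × ℝ) (i : Fin N),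
      Dt (fun k => f k • w k) i = f i * Dt w i + dot2 (Gt f i) (w i))
    (p : ℝ → Fin N → ℝ) (V : ℝ → Fin N → ℝ × ℝ)
    (hp : ∀ (t : ℝ) (i : Fin N),
      HasDerivAt (fun s => p s i) (-(1/(2 * J i)) * Dt (V t) i) t)
    (hV : ∀ (t : ℝ) (i : Fin N),
      HasDerivAt (fun s => V s i) ((-(1/(J i))) • Gt (p t) i) t) :
    ∀ (t : ℝ) (i : Fin N),
      HasDerivAt (fun s => (p s i)^2 + (1/2) * dot2 (V s i) (V s i))
        (-(1/(J i)) * Dt (fun k => p t k • V t k) i) t := by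
  intro t i
  have hJ' : J i ≠ 0 := (hJ i).ne'
  have hV1 : HasDerivAt (fun s => (V s i).1) (((-(1/(J i))) • Gt (p t) i).1) t :=
    (hV t i).fst
  have hV2 : HasDerivAt (fun s => (V s i).2) (((-(1/(J i))) • Gt (p t) i).2) t :=
    (hV t i).snd
  have hp2 : HasDerivAt (fun s => (p s i)^2)
      (2 * p t i ^ 1 * (-(1/(2 * J i)) * Dt (V t) i)) t := by
    simpa using (hp t i).fun_pow 2
  have hD : HasDerivAt (fun s => (p s i)^2 + (1/2) * ((V s i).1 * (V s i).1 + (V s i).2 * (V s i).2))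
      (2 * p t i ^ 1 * (-(1/(2 * J i)) * Dt (V t) i)
        + (1/2) * ((((-(1/(J i))) • Gt (p t) i).1 * (V t i).1 + (V t i).1 * (((-(1/(J i))) • Gt (p t) i).1))
          + ((((-(1/(J i))) • Gt (p t) i).2 * (V t i).2 + (V t i).2 * (((-(1/(J i))) • Gt (p t) i).2))))) t :=
    hp2.add (((hV1.mul hV1).add (hV2.mul hV2)).const_mul (1/2))
  convert hD using 1
  · rfl
  rw [hprod]
  simp only [dot2, Prod.smul_fst, Prod.smul_snd, smul_eq_mul]
  field_simp
  ring
end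

section
/- Total energy conservation: under the hypotheses of the pointwise energy identity, define E(t) = Σ_i M_i [ p_i(t)² + (1/2)⟨V_i(t), V_i(t)⟩ ] J_i Δx Δy with positive weights M_i. If the exactness condition Σ_i M_i (D̃ w)_i = 0 holds for every discrete flux field w with p vanishing on the boundary (equivalently, Σ_i M_i D̃(p V)_i = 0 whenever p = 0 on ∂Ω), then dE/dt = 0 for all t ≥ 0. -/
open Finset

/-- Total semi-discrete energy conservation for the curvilinear acoustic
system under the exactness condition. -/
theorem stmt_10 (N : ℕ)
    (Dt : ((Fin N → ℝ × ℝ)) →ₗ[ℝ] (Fin N → ℝ))      -- curvilinear divergence D̃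
    (Gt : ((Fin N → ℝ)) →ₗ[ℝ] (Fin N → ℝ × ℝ))      -- curvilinear gradient G̃
    (J M : Fin N → ℝ) (hJ : ∀ i, 0 < J i) (hM : ∀ i, 0 < M i)
    (Δx Δy : ℝ) (hΔx : 0 < Δx) (hΔy : 0 < Δy)
    (S : Set (Fin N))                                -- boundary indices
    (hprod : ∀ (f : Fin N → ℝ) (w : Fin N → ℝ × ℝ) (i : Fin N),
      Dt (fun k => f k • w k) i = f i * Dt w i + dot2 (Gt f i) (w i))
    (hexact : ∀ (q : Fin N → ℝ) (w : Fin N → ℝ × ℝ),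
      (∀ i ∈ S, q i = 0) →
      ∑ i, M i * Dt (fun k => q k • w k) i = 0)
    (p : ℝ → Fin N → ℝ) (V : ℝ → Fin N → ℝ × ℝ)
    (hp : ∀ (t : ℝ) (i : Fin N),
      HasDerivAt (fun s => p s i) (-(1/(2 * J i)) * Dt (V t) i) t)
    (hV : ∀ (t : ℝ) (i : Fin N),
      HasDerivAt (fun s => V s i) ((-(1/(J i))) • Gt (p t) i) t)
    (hbd : ∀ (t : ℝ), ∀ i ∈ S, p t i = 0) :
    ∀ t : ℝ, 0 ≤ t →
      HasDerivAt (fun s =>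
        ∑ i, M i * ((p s i)^2 + (1/2) * dot2 (V s i) (V s i)) * J i * (Δx * Δy))
        0 t := by
  intro t _
  have hJ' : ∀ i, (J i : ℝ) ≠ 0 := fun i => (hJ i).ne'
  have key : ∀ i : Fin N, HasDerivAt
      (fun s => M i * ((p s i)^2 + (1/2) * dot2 (V s i) (V s i)) * J i * (Δx * Δy))
      (-(M i * (Δx * Δy)) * Dt (fun k => p t k • V t k) i) t := by
    intro i
    have hp' := hp t i
    have hV' := hV t i
    have hV1 : HasDerivAt (fun s => (V s i).1) (((-(1/(J i))) • Gt (p t) i).1) t := hV'.fst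
    have hV2 : HasDerivAt (fun s => (V s i).2) (((-(1/(J i))) • Gt (p t) i).2) t := hV'.snd
    have h1 : HasDerivAt (fun s => (p s i)^2)
        (2 * p t i * (-(1/(2 * J i)) * Dt (V t) i)) t := by
      have := hp'.fun_pow 2
      convert! this using 1
      ring
    have h2 : HasDerivAt (fun s => dot2 (V s i) (V s i))
        ((((-(1/(J i))) • Gt (p t) i).1 * (V t i).1 + (V t i).1 * (((-(1/(J i))) • Gt (p t) i).1))
          + ((((-(1/(J i))) • Gt (p t) i).2 * (V t i).2 + (V t i).2 * (((-(1/(J i))) • Gt (p t) i).2)))) t := by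
      unfold dot2
      exact (hV1.mul hV1).add (hV2.mul hV2)
    have hd := (((h1.fun_add (h2.const_mul (1/2))).const_mul (M i)).mul_const (J i)).mul_const (Δx * Δy)
    convert! hd using 1
    rw [hprod]
    unfold dot2
    simp only [Prod.smul_fst, Prod.smul_snd, smul_eq_mul]
    field_simp [hJ' i]
    ring
  have hzero : ∑ i, -(M i * (Δx * Δy)) * Dt (fun k => p t k • V t k) i = 0 := by
    have : ∑ i, -(M i * (Δx * Δy)) * Dt (fun k => p t k • V t k) i
        = -(Δx * Δy) * ∑ i, M i * Dt (fun k => p t k • V t k) i := by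
      rw [Finset.mul_sum]
      exact Finset.sum_congr rfl fun i _ => by ring
    rw [this, hexact (p t) (V t) (hbd t), mul_zero]
  have hsum : HasDerivAt
      (fun s => ∑ i, M i * ((p s i)^2 + (1/2) * dot2 (V s i) (V s i)) * J i * (Δx * Δy))
      (∑ i, -(M i * (Δx * Δy)) * Dt (fun k => p t k • V t k) i) t :=
    HasDerivAt.fun_sum (fun i _ => key i)
  rwa [hzero] at hsum
end

section
/- If D, G, P, Q satisfy ⟨D v, f⟩_Q + ⟨G f, v⟩_P = f_{m+1} v_m − f_0 v_0 for all f ∈ ℝ^{m+2}, v ∈ ℝ^{m+1}, with P, Q symmetric positive definite, then the mimetic Laplacian restricted to zero-boundary scalars, L₀ = D G composed with the restriction/extension by zero to interior indices, is self-adjoint and negative semidefinite with respect to the Q-weighted inner product: ⟨L₀ f, f⟩_Q = −⟨G f, G f⟩_P ≤ 0 for all f with f_0 = f_{m+1} = 0. -/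
open Matrix

/-- The mimetic Laplacian restricted to zero-boundary scalar fields is
self-adjoint and negative semidefinite with respect to the `Q`-weighted
inner product. -/
theorem stmt_19 (m : ℕ)
    (D : Matrix (Fin (m+2)) (Fin (m+1)) ℝ)
    (G : Matrix (Fin (m+1)) (Fin (m+2)) ℝ)
    (Q : Matrix (Fin (m+2)) (Fin (m+2)) ℝ)
    (P : Matrix (Fin (m+1)) (Fin (m+1)) ℝ)
    (hQpd : Q.PosDef) (hPpd : P.PosDef)
    (hibp : ∀ (f : Fin (m+2) → ℝ) (v : Fin (m+1) → ℝ),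
      (D.mulVec v) ⬝ᵥ (Q.mulVec f) + (G.mulVec f) ⬝ᵥ (P.mulVec v)
        = f (Fin.last (m+1)) * v (Fin.last m) - f 0 * v 0) :
    ∀ f : Fin (m+2) → ℝ, f 0 = 0 → f (Fin.last (m+1)) = 0 →
      (D.mulVec (G.mulVec f)) ⬝ᵥ (Q.mulVec f)
          = -((G.mulVec f) ⬝ᵥ (P.mulVec (G.mulVec f))) ∧
      (D.mulVec (G.mulVec f)) ⬝ᵥ (Q.mulVec f) ≤ 0 := by
  intro f h0 hl
  have h := hibp f (G.mulVec f)
  rw [h0, hl, zero_mul, zero_mul, sub_zero] at h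
  have heq : (D.mulVec (G.mulVec f)) ⬝ᵥ (Q.mulVec f)
      = -((G.mulVec f) ⬝ᵥ (P.mulVec (G.mulVec f))) := by linarith
  refine ⟨heq, ?_⟩
  rw [heq]
  have h2 := hPpd.posSemidef.dotProduct_mulVec_nonneg (G.mulVec f)
  simpa using h2
end
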